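/- Let r > 0 and 0 < δ_n → 0 satisfy the asymptotic equation h δ_n^{-(r+1)} + D₀ δ_n^{-1} + O(δ_n^{C₀-1}) + o(1) = n as n → ∞, where h > 0, D₀ ∈ ℝ and 0 < C₀ ≤ 1. Then δ_n = h^{1/(r+1)} n^{-1/(r+1)} + (D₀/(r+1)) n^{-1} + O(n^{-1-β}), where β = C₀/(r+1) if r ≥ C₀ and β = r/(r+1) otherwise. -/

import Mathlib

set_option maxHeartbeats 1000000
open Real Filter Asymptotics Topology

lemma nat_rpow_isBigO {a b : ℝ} (hab : a ≤ b) :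
    (fun n : ℕ => (n:ℝ) ^ a) =O[atTop] fun n : ℕ => (n:ℝ) ^ b := by
  apply IsBigO.of_bound 1
  filter_upwards [eventually_ge_atTop 1] with n hn
  have h1 : (1:ℝ) ≤ (n:ℝ) := by exact_mod_cast hn
  have h0 : (0:ℝ) ≤ (n:ℝ) := by linarith
  rw [one_mul, Real.norm_eq_abs, Real.norm_eq_abs,
    abs_of_nonneg (Real.rpow_nonneg h0 a), abs_of_nonneg (Real.rpow_nonneg h0 b)]
  exact Real.rpow_le_rpow_of_exponent_le h1 hab


lemma rpow_taylor (q : ℝ) : ∃ C : ℝ, 0 ≤ C ∧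
    ∀ x : ℝ, |x| ≤ 1/2 → |(1+x) ^ q - 1 - q * x| ≤ C * x ^ 2 := by
  set M : ℝ := |q-1| * ((1/2:ℝ) ^ (q-2) + (3/2:ℝ) ^ (q-2)) with hMdef
  have hM0 : 0 ≤ M := by positivity
  have hbase : ∀ y : ℝ, |y| ≤ 1/2 → ((1:ℝ)+y) ^ (q-2) ≤ (1/2:ℝ) ^ (q-2) + (3/2:ℝ) ^ (q-2) := by
    intro y hy
    rw [abs_le] at hy
    have h1 : (1/2:ℝ) ≤ 1 + y := by linarith [hy.1]
    have h2 : 1 + y ≤ 3/2 := by linarith [hy.2]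
    rcases le_or_gt 0 (q-2) with hq | hq
    · have := Real.rpow_le_rpow (by linarith) h2 hq
      have h0 : (0:ℝ) ≤ (1/2:ℝ) ^ (q-2) := by positivity
      linarith
    · have h3 : ((1:ℝ)+y) ^ (q-2) ≤ (1/2:ℝ) ^ (q-2) :=
        Real.rpow_le_rpow_of_nonpos (by norm_num) h1 hq.le
      have h0 : (0:ℝ) ≤ (3/2:ℝ) ^ (q-2) := by positivity
      linarith
  have hψ : ∀ y : ℝ, |y| ≤ 1/2 → |((1:ℝ)+y) ^ (q-1) - 1| ≤ M * |y| := by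
    intro y hy
    have key := Convex.norm_image_sub_le_of_norm_hasDerivWithin_le
      (f := fun z : ℝ => (1+z) ^ (q-1))
      (f' := fun z : ℝ => 1 * (q-1) * (1+z) ^ (q-1-1))
      (s := Set.Icc (-(1/2):ℝ) (1/2)) (C := M) (x := (0:ℝ)) (y := y)
      (fun z hz => by
        have hz' : (0:ℝ) < 1 + z := by
          rcases hz with ⟨hz1, hz2⟩; linarith
        exact (((hasDerivAt_id z).const_add 1).rpow_const (Or.inl hz'.ne')).hasDerivWithinAt)
      (fun z hz => by
        have hzabs : |z| ≤ 1/2 := abs_le.2 ⟨hz.1, hz.2⟩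
        have hb := hbase z hzabs
        have h1 : q - 1 - 1 = q - 2 := by ring
        rw [h1]
        have hpos : (0:ℝ) ≤ (1+z) ^ (q-2) := by
          apply Real.rpow_nonneg
          rw [abs_le] at hzabs; linarith [hzabs.1]
        calc ‖1 * (q-1) * (1+z) ^ (q-2)‖ = |q-1| * ((1+z) ^ (q-2)) := by
              rw [Real.norm_eq_abs, one_mul, abs_mul, abs_of_nonneg hpos]
          _ ≤ M := by
              rw [hMdef]
              exact mul_le_mul_of_nonneg_left hb (abs_nonneg _))
      (convex_Icc _ _)
      (Set.mem_Icc.2 ⟨by norm_num, by norm_num⟩)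
      (Set.mem_Icc.2 ⟨(abs_le.1 hy).1, (abs_le.1 hy).2⟩)
    simpa using key
  refine ⟨|q| * M, by positivity, fun x hx => ?_⟩
  have key := Convex.norm_image_sub_le_of_norm_hasDerivWithin_le
    (f := fun z : ℝ => (1+z) ^ q - q * z)
    (f' := fun z : ℝ => 1 * q * (1+z) ^ (q-1) - q)
    (s := Set.Icc (-|x|) (|x|)) (C := |q| * M * |x|) (x := (0:ℝ)) (y := x)
    (fun z hz => by
      have hz' : (0:ℝ) < 1 + z := by
        have h1 : -(1/2:ℝ) ≤ z := le_trans (by linarith) hz.1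
        linarith
      have hd1 : HasDerivAt (fun z : ℝ => (1+z) ^ q) (1 * q * (1+z) ^ (q-1)) z :=
        ((hasDerivAt_id z).const_add 1).rpow_const (Or.inl hz'.ne')
      have hd2 : HasDerivAt (fun z : ℝ => q * z) q z := by
        simpa using (hasDerivAt_id z).const_mul q
      exact (hd1.sub hd2).hasDerivWithinAt)
    (fun z hz => by
      have hzx : |z| ≤ |x| := abs_le.2 ⟨hz.1, hz.2⟩
      have hz2 : |z| ≤ 1/2 := le_trans hzx hx
      have hfac : 1 * q * (1+z) ^ (q-1) - q = q * ((1+z) ^ (q-1) - 1) := by ring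
      calc ‖1 * q * (1+z) ^ (q-1) - q‖ = |q| * |(1+z) ^ (q-1) - 1| := by
            rw [Real.norm_eq_abs, hfac, abs_mul]
        _ ≤ |q| * (M * |z|) := mul_le_mul_of_nonneg_left (hψ z hz2) (abs_nonneg _)
        _ ≤ |q| * (M * |x|) := by
            exact mul_le_mul_of_nonneg_left (mul_le_mul_of_nonneg_left hzx hM0) (abs_nonneg _)
        _ = |q| * M * |x| := by ring)
    (convex_Icc _ _)
    (Set.mem_Icc.2 ⟨neg_nonpos_of_nonneg (abs_nonneg x), abs_nonneg x⟩)
    (Set.mem_Icc.2 ⟨neg_abs_le x, le_abs_self x⟩)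
  have h0 : ((1:ℝ)+(0:ℝ)) ^ q - q * 0 = 1 := by simp
  rw [Real.norm_eq_abs] at key
  have hkey : |(1+x) ^ q - q * x - 1| ≤ |q| * M * |x| * |x| := by
    simpa [h0] using key
  have he : |(1+x) ^ q - 1 - q * x| = |(1+x) ^ q - q * x - 1| := by ring_nf
  rw [he]
  calc |(1+x) ^ q - q * x - 1| ≤ |q| * M * |x| * |x| := hkey
    _ = |q| * M * x ^ 2 := by rw [mul_assoc, ← abs_mul, ← sq, abs_of_nonneg (sq_nonneg x)]

/-- Asymptotic inversion of the equation
h δ_n^{-(r+1)} + D₀ δ_n^{-1} + O(δ_n^{C₀-1}) + o(1) = n, giving the two-term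
expansion of δ_n with error O(n^{-1-β}). -/
theorem delta_n_asymptotic_expansion (r h D₀ C₀ : ℝ) (hr : 0 < r) (hh : 0 < h)
    (hC₀ : 0 < C₀) (hC₀' : C₀ ≤ 1) (δ : ℕ → ℝ) (hδpos : ∀ n, 0 < δ n)
    (hδ0 : Tendsto δ atTop (nhds 0))
    (e₁ e₂ : ℕ → ℝ)
    (he₁ : e₁ =O[atTop] fun n => (δ n) ^ (C₀ - 1))
    (he₂ : Tendsto e₂ atTop (nhds 0))
    (heq : ∀ n : ℕ, h * (δ n) ^ (-(r + 1)) + D₀ * (δ n)⁻¹ + e₁ n + e₂ n = n) :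
    (fun n : ℕ => δ n - h ^ (1 / (r + 1)) * (n : ℝ) ^ (-1 / (r + 1))
        - (D₀ / (r + 1)) * (n : ℝ)⁻¹) =O[atTop]
      fun n : ℕ => (n : ℝ) ^ (-1 - (if C₀ ≤ r then C₀ / (r + 1) else r / (r + 1))) := by
  have hp : (0:ℝ) < r + 1 := by linarith
  set p := r + 1 with hpdef
  set A := h ^ (1/p) with hAdef
  have hA : 0 < A := Real.rpow_pos_of_pos hh _
  set β := if C₀ ≤ r then C₀ / p else r / p with hβdef
  have hβr : β ≤ r / p := by
    rw [hβdef]; split_ifs with hcr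
    · exact (div_le_div_iff_of_pos_right hp).2 hcr
    · exact le_rfl
  have hβC : β ≤ C₀ / p := by
    rw [hβdef]; split_ifs with hcr
    · exact le_rfl
    · push_neg at hcr; exact (div_le_div_iff_of_pos_right hp).2 hcr.le
  have hβ1 : β ≤ 1 / p := by
    rw [hβdef]; split_ifs with hcr
    · exact (div_le_div_iff_of_pos_right hp).2 (by linarith)
    · push_neg at hcr; exact (div_le_div_iff_of_pos_right hp).2 (by linarith)
  -- basic limits
  have hδinv_top : Tendsto (fun n => (δ n)⁻¹) atTop atTop := by
    have h1 : Tendsto δ atTop (𝓝[>] 0) :=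
      tendsto_nhdsWithin_of_tendsto_nhds_of_eventually_within _ hδ0
        (Eventually.of_forall fun n => hδpos n)
    exact tendsto_inv_nhdsGT_zero.comp h1
  have hδrpow : ∀ a : ℝ, 0 < a → Tendsto (fun n => δ n ^ a) atTop (𝓝 0) := by
    intro a ha
    have hc := (Real.continuousAt_rpow_const 0 a (Or.inr ha.le)).tendsto.comp hδ0
    simpa [Real.zero_rpow ha.ne', Function.comp_def] using hc
  -- identity: n * δ^p = h + D₀ δ^(p-1) + e₁ δ^p + e₂ δ^p
  have hident : ∀ n : ℕ, (n:ℝ) * δ n ^ p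
      = h + D₀ * δ n ^ (p-1) + e₁ n * δ n ^ p + e₂ n * δ n ^ p := by
    intro n
    have hne : δ n ^ p ≠ 0 := (Real.rpow_pos_of_pos (hδpos n) p).ne'
    have h1 : δ n ^ (-p) * δ n ^ p = 1 := by
      rw [Real.rpow_neg (hδpos n).le, inv_mul_cancel₀ hne]
    have h2 : (δ n)⁻¹ * δ n ^ p = δ n ^ (p-1) := by
      rw [← Real.rpow_neg_one (δ n), ← Real.rpow_add (hδpos n)]
      congr 1; ring
    calc (n:ℝ) * δ n ^ p
        = (h * δ n ^ (-p) + D₀ * (δ n)⁻¹ + e₁ n + e₂ n) * δ n ^ p := by rw [heq n]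
      _ = h * (δ n ^ (-p) * δ n ^ p) + D₀ * ((δ n)⁻¹ * δ n ^ p)
          + e₁ n * δ n ^ p + e₂ n * δ n ^ p := by ring
      _ = _ := by rw [h1, h2]; ring
  have hnδp : Tendsto (fun n : ℕ => (n:ℝ) * δ n ^ p) atTop (𝓝 h) := by
    have t1 : Tendsto (fun n => D₀ * δ n ^ (p-1)) atTop (𝓝 0) := by
      have := (hδrpow (p-1) (by simp [hpdef]; linarith)).const_mul D₀
      simpa using this
    have t2 : Tendsto (fun n => e₁ n * δ n ^ p) atTop (𝓝 0) := by
      have ho : (fun n => e₁ n * δ n ^ p) =O[atTop] fun n => δ n ^ (C₀ - 1 + p) := by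
        refine (he₁.mul (isBigO_refl (fun n => δ n ^ p) atTop)).congr'
          EventuallyEq.rfl (Eventually.of_forall fun n => ?_)
        show δ n ^ (C₀ - 1) * δ n ^ p = δ n ^ (C₀ - 1 + p)
        rw [← Real.rpow_add (hδpos n)]
      exact ho.trans_tendsto (hδrpow _ (by simp [hpdef]; linarith))
    have t3 : Tendsto (fun n => e₂ n * δ n ^ p) atTop (𝓝 0) := by
      have := he₂.mul (hδrpow p hp)
      simpa using this
    have hsum := ((tendsto_const_nhds (x := h)).add t1).add t2 |>.add t3
    rw [show h + 0 + 0 + 0 = h by ring] at hsum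
    exact hsum.congr fun n => (hident n).symm
  have hδA : Tendsto (fun n : ℕ => δ n * (n:ℝ) ^ (1/p)) atTop (𝓝 A) := by
    have hc : ContinuousAt (fun x : ℝ => x ^ (1/p)) h :=
      Real.continuousAt_rpow_const _ _ (Or.inl hh.ne')
    have h1 := hc.tendsto.comp hnδp
    refine h1.congr fun n => ?_
    show ((n:ℝ) * δ n ^ p) ^ (1/p) = δ n * (n:ℝ) ^ (1/p)
    rw [Real.mul_rpow (Nat.cast_nonneg n) (Real.rpow_pos_of_pos (hδpos n) p).le,
      ← Real.rpow_mul (hδpos n).le, mul_one_div, div_self hp.ne', Real.rpow_one, mul_comm]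
  have hδAinv : Tendsto (fun n : ℕ => (δ n)⁻¹ * (n:ℝ) ^ (-(1/p))) atTop (𝓝 A⁻¹) := by
    refine (hδA.inv₀ hA.ne').congr fun n => ?_
    rw [mul_inv, ← Real.rpow_neg (Nat.cast_nonneg n)]
  have hpne : p ≠ 0 := hp.ne'
  have hhne : h ≠ 0 := hh.ne'
  -- O bounds
  have hbound1 : (fun n : ℕ => (δ n)⁻¹ * (n:ℝ)⁻¹) =O[atTop] fun n : ℕ => (n:ℝ) ^ (-(r/p)) := by
    have h1 : (fun n : ℕ => (δ n)⁻¹ * (n:ℝ) ^ (-(1/p))) =O[atTop] (fun _ => (1:ℝ)) :=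
      hδAinv.isBigO_one ℝ
    have h2 := h1.mul (isBigO_refl (fun n : ℕ => (n:ℝ) ^ (-(r/p))) atTop)
    refine h2.congr' ?_ (Eventually.of_forall fun n => one_mul _)
    filter_upwards [eventually_ge_atTop 1] with n hn
    have hn0 : (0:ℝ) < (n:ℝ) := by exact_mod_cast hn
    show (δ n)⁻¹ * (n:ℝ) ^ (-(1/p)) * (n:ℝ) ^ (-(r/p)) = (δ n)⁻¹ * (n:ℝ)⁻¹
    rw [mul_assoc, ← Real.rpow_add hn0,
      show -(1/p) + -(r/p) = (-1 : ℝ) from by field_simp; linarith [hpdef],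
      Real.rpow_neg_one]
  have hδC : (fun n : ℕ => δ n ^ (C₀ - 1)) =O[atTop] fun n : ℕ => (n:ℝ) ^ ((1-C₀)/p) := by
    have hcont : Tendsto (fun n : ℕ => (δ n * (n:ℝ) ^ (1/p)) ^ (C₀ - 1)) atTop
        (𝓝 (A ^ (C₀ - 1))) :=
      ((Real.continuousAt_rpow_const _ _ (Or.inl hA.ne')).tendsto).comp hδA
    have h1 : (fun n : ℕ => (δ n * (n:ℝ) ^ (1/p)) ^ (C₀ - 1)) =O[atTop] (fun _ => (1:ℝ)) :=
      hcont.isBigO_one ℝ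
    have h2 := h1.mul (isBigO_refl (fun n : ℕ => (n:ℝ) ^ ((1-C₀)/p)) atTop)
    refine h2.congr' ?_ (Eventually.of_forall fun n => one_mul _)
    filter_upwards [eventually_ge_atTop 1] with n hn
    have hn0 : (0:ℝ) < (n:ℝ) := by exact_mod_cast hn
    show (δ n * (n:ℝ) ^ (1/p)) ^ (C₀ - 1) * (n:ℝ) ^ ((1-C₀)/p) = δ n ^ (C₀ - 1)
    rw [Real.mul_rpow (hδpos n).le (Real.rpow_nonneg hn0.le _),
      ← Real.rpow_mul hn0.le, mul_assoc, ← Real.rpow_add hn0,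
      show 1/p * (C₀ - 1) + (1-C₀)/p = 0 from by ring, Real.rpow_zero, mul_one]
  set sf : ℕ → ℝ := fun n => D₀ * (δ n)⁻¹ + e₁ n + e₂ n with hsdef
  set t : ℕ → ℝ := fun n => sf n / n with htdef
  have c1 : (fun n : ℕ => D₀ * ((δ n)⁻¹ * (n:ℝ)⁻¹)) =O[atTop] fun n : ℕ => (n:ℝ) ^ (-(r/p)) :=
    hbound1.const_mul_left D₀
  have c2 : (fun n : ℕ => e₁ n * (n:ℝ)⁻¹) =O[atTop] fun n : ℕ => (n:ℝ) ^ (-(r/p)) := by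
    have h1 := (he₁.trans hδC).mul (isBigO_refl (fun n : ℕ => ((n:ℝ))⁻¹) atTop)
    refine (h1.trans_eventuallyEq (g₂ := fun n : ℕ => (n:ℝ) ^ ((1-C₀)/p + -1)) ?_).trans
      (nat_rpow_isBigO ?_)
    · filter_upwards [eventually_ge_atTop 1] with n hn
      have hn0 : (0:ℝ) < (n:ℝ) := by exact_mod_cast hn
      show (n:ℝ) ^ ((1-C₀)/p) * (n:ℝ)⁻¹ = (n:ℝ) ^ ((1-C₀)/p + -1)
      rw [← Real.rpow_neg_one (n:ℝ), ← Real.rpow_add hn0]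
    · rw [show (1-C₀)/p + (-1:ℝ) = (-C₀ - r)/p from by field_simp; linarith [hpdef],
        show -(r/p) = (-r)/p from (neg_div _ _).symm]
      exact (div_le_div_iff_of_pos_right hp).2 (by linarith)
  have c3 : (fun n : ℕ => e₂ n * (n:ℝ)⁻¹) =O[atTop] fun n : ℕ => (n:ℝ) ^ (-(r/p)) := by
    have h1 := (he₂.isBigO_one ℝ).mul (isBigO_refl (fun n : ℕ => ((n:ℝ))⁻¹) atTop)
    refine (h1.trans_eventuallyEq (g₂ := fun n : ℕ => (n:ℝ) ^ (-1:ℝ)) ?_).trans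
      (nat_rpow_isBigO ?_)
    · filter_upwards [eventually_ge_atTop 1] with n hn
      show (1:ℝ) * (n:ℝ)⁻¹ = (n:ℝ) ^ (-1:ℝ)
      rw [one_mul, Real.rpow_neg_one]
    · rw [show -(r/p) = (-r)/p from (neg_div _ _).symm,
        show (-1:ℝ) = (-p)/p from by field_simp]
      exact (div_le_div_iff_of_pos_right hp).2 (by linarith [hpdef])
  have ht : t =O[atTop] fun n : ℕ => (n:ℝ) ^ (-(r/p)) := by
    have hsum := (c1.add c2).add c3
    refine hsum.congr' (Eventually.of_forall fun n => ?_) EventuallyEq.rfl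
    show D₀ * ((δ n)⁻¹ * (n:ℝ)⁻¹) + e₁ n * (n:ℝ)⁻¹ + e₂ n * (n:ℝ)⁻¹ = t n
    simp only [htdef, hsdef]
    rw [div_eq_mul_inv]; ring
  have hnrp0 : Tendsto (fun n : ℕ => (n:ℝ) ^ (-(r/p))) atTop (𝓝 0) := by
    have := (tendsto_rpow_neg_atTop (y := r/p) (by positivity)).comp
      (tendsto_natCast_atTop_atTop (R := ℝ))
    exact this
  have ht0 : Tendsto t atTop (𝓝 0) := ht.trans_tendsto hnrp0
  have hev : ∀ᶠ n in atTop, |t n| ≤ 1/2 := by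
    have h2 := Metric.tendsto_nhds.mp ht0 (1/2) (by norm_num)
    filter_upwards [h2] with n hn
    rw [Real.dist_eq, sub_zero] at hn
    exact hn.le
  have hkey : ∀ᶠ n in atTop, δ n = A * (n:ℝ) ^ (-(1/p)) * (1 - t n) ^ (-(1/p)) ∧
      (δ n)⁻¹ = A⁻¹ * (n:ℝ) ^ (1/p) * (1 - t n) ^ (1/p) := by
    filter_upwards [hev, eventually_ge_atTop 1] with n htn hn
    have hn0 : (0:ℝ) < (n:ℝ) := by exact_mod_cast hn
    have hnne : ((n:ℝ)) ≠ 0 := hn0.ne'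
    have h1t : (0:ℝ) < 1 - t n := by
      have := abs_le.1 htn; linarith [this.2]
    have hsn : h * δ n ^ (-p) = (n:ℝ) * (1 - t n) := by
      have e2 : (n:ℝ) * (1 - t n) = (n:ℝ) - sf n := by
        simp only [htdef]; field_simp
      rw [e2]
      simp only [hsdef]
      linarith [heq n]
    have hδp : δ n ^ (-p) = (n:ℝ) * (1 - t n) * h⁻¹ := by
      field_simp
      linarith [hsn]
    have hδeq : δ n = ((n:ℝ) * (1 - t n) * h⁻¹) ^ (-(1/p)) := by
      rw [← hδp, ← Real.rpow_mul (hδpos n).le,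
        show -p * -(1/p) = 1 from by field_simp, Real.rpow_one]
    have hδinveq : (δ n)⁻¹ = ((n:ℝ) * (1 - t n) * h⁻¹) ^ (1/p) := by
      rw [← hδp, ← Real.rpow_mul (hδpos n).le,
        show -p * (1/p) = -1 from by field_simp, Real.rpow_neg_one]
    constructor
    · rw [hδeq, Real.mul_rpow (by positivity) (by positivity),
        Real.mul_rpow hn0.le h1t.le, Real.inv_rpow hh.le, Real.rpow_neg hh.le, inv_inv, ← hAdef]
      ring
    · rw [hδinveq, Real.mul_rpow (by positivity) (by positivity),
        Real.mul_rpow hn0.le h1t.le, Real.inv_rpow hh.le, ← hAdef]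
      ring
  obtain ⟨C₁, hC₁0, hC₁⟩ := rpow_taylor (-(1/p))
  obtain ⟨C₂, hC₂0, hC₂⟩ := rpow_taylor (1/p)
  have hEbig : (fun n : ℕ => (1 - t n) ^ (-(1/p)) - 1 - t n / p) =O[atTop]
      (fun n : ℕ => t n * t n) := by
    apply IsBigO.of_bound C₁
    filter_upwards [hev] with n htn
    have h1 := hC₁ (-(t n)) (by rwa [abs_neg])
    have e1 : (1:ℝ) + -(t n) = 1 - t n := by ring
    have e2 : -(1/p) * -(t n) = t n / p := by ring
    rw [e1, e2] at h1
    rw [Real.norm_eq_abs, Real.norm_eq_abs]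
    calc |(1 - t n) ^ (-(1/p)) - 1 - t n / p| ≤ C₁ * (-(t n))^2 := h1
      _ = C₁ * |t n * t n| := by
          rw [neg_sq, abs_of_nonneg (mul_self_nonneg _), sq]
  have hVbig : (fun n : ℕ => (1 - t n) ^ (1/p) - 1) =O[atTop] t := by
    apply IsBigO.of_bound (1/p + C₂)
    filter_upwards [hev] with n htn
    have h1 := hC₂ (-(t n)) (by rwa [abs_neg])
    have e1 : (1:ℝ) + -(t n) = 1 - t n := by ring
    rw [e1] at h1
    rw [Real.norm_eq_abs, Real.norm_eq_abs]
    have h2 : |(1 - t n) ^ (1/p) - 1| ≤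
        |(1 - t n) ^ (1/p) - 1 - 1/p * -(t n)| + |1/p * -(t n)| := by
      have h0 := abs_add_le ((1 - t n) ^ (1/p) - 1 - 1/p * -(t n)) (1/p * -(t n))
      have e3 : (1 - t n) ^ (1/p) - 1 - 1/p * -(t n) + 1/p * -(t n)
          = (1 - t n) ^ (1/p) - 1 := by ring
      rwa [e3] at h0
    have h3 : |1/p * -(t n)| = (1/p) * |t n| := by
      rw [abs_mul, abs_neg, abs_of_nonneg (by positivity : (0:ℝ) ≤ 1/p)]
    have h4 : (-(t n))^2 ≤ (1/2) * |t n| := by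
      rw [neg_sq]
      nlinarith [sq_abs (t n), abs_nonneg (t n)]
    have h5 := mul_le_mul_of_nonneg_left h4 hC₂0
    have h6 : (0:ℝ) ≤ C₂ * |t n| := mul_nonneg hC₂0 (abs_nonneg _)
    linarith [h1, h2, h3, h5, h6]
  have hmain : (fun n : ℕ => δ n - A * (n:ℝ) ^ (-(1/p)) - (D₀/p) * (n:ℝ)⁻¹) =ᶠ[atTop]
      (fun n : ℕ => (D₀/p) * (n:ℝ)⁻¹ * ((1 - t n) ^ (1/p) - 1)
        + (A/p) * ((n:ℝ) ^ (-(1/p)) * (n:ℝ)⁻¹) * (e₁ n + e₂ n)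
        + A * (n:ℝ) ^ (-(1/p)) * ((1 - t n) ^ (-(1/p)) - 1 - t n / p)) := by
    filter_upwards [hkey, hev, eventually_ge_atTop 1] with n hk htn hn
    obtain ⟨hk1, hk2⟩ := hk
    have hn0 : (0:ℝ) < (n:ℝ) := by exact_mod_cast hn
    have hnne : ((n:ℝ)) ≠ 0 := hn0.ne'
    have h1t : (0:ℝ) < 1 - t n := by have := abs_le.1 htn; linarith [this.2]
    have hBpos : (0:ℝ) < (n:ℝ) ^ (1/p) := Real.rpow_pos_of_pos hn0 _
    have hVpos : (0:ℝ) < (1 - t n) ^ (1/p) := Real.rpow_pos_of_pos h1t _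
    have hrwn : (n:ℝ) ^ (-(1/p)) = ((n:ℝ) ^ (1/p))⁻¹ := Real.rpow_neg hn0.le _
    have hrwt : (1 - t n) ^ (-(1/p)) = ((1 - t n) ^ (1/p))⁻¹ := Real.rpow_neg h1t.le _
    rw [hrwn, hrwt] at hk1 ⊢
    have hT : (n:ℝ) * t n = D₀ * (δ n)⁻¹ + e₁ n + e₂ n := by
      simp only [htdef, hsdef]
      field_simp
    rw [hk2] at hT
    generalize hV : (1 - t n) ^ (1/p) = V at hk1 hT hVpos ⊢
    generalize hB : ((n:ℝ)) ^ (1/p) = B at hk1 hT hBpos ⊢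
    have hVne : V ≠ 0 := hVpos.ne'
    have hBne : B ≠ 0 := hBpos.ne'
    have hAne : A ≠ 0 := hA.ne'
    have ht2 : t n = (D₀ * (A⁻¹ * B * V) + e₁ n + e₂ n) / n := by
      rw [← hT]; field_simp
    rw [hk1, ht2]
    field_simp
    ring
  have hb1 : (fun n : ℕ => (D₀/p) * (n:ℝ)⁻¹ * ((1 - t n) ^ (1/p) - 1)) =O[atTop]
      fun n : ℕ => (n:ℝ) ^ (-1 - β) := by
    have h1 := (isBigO_refl (fun n : ℕ => ((n:ℝ))⁻¹) atTop).mul hVbig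
    have h2 := h1.trans ((isBigO_refl (fun n : ℕ => ((n:ℝ))⁻¹) atTop).mul ht)
    have h3 : (fun n : ℕ => ((n:ℝ))⁻¹ * (n:ℝ) ^ (-(r/p))) =ᶠ[atTop]
        fun n : ℕ => (n:ℝ) ^ (-1 + -(r/p)) := by
      filter_upwards [eventually_ge_atTop 1] with n hn
      have hn0 : (0:ℝ) < (n:ℝ) := by exact_mod_cast hn
      rw [← Real.rpow_neg_one (n:ℝ), ← Real.rpow_add hn0]
    have h4 := (h2.trans_eventuallyEq h3).trans
      (nat_rpow_isBigO (show -1 + -(r/p) ≤ -1 - β from by linarith [hβr]))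
    exact (h4.const_mul_left (D₀/p)).congr'
      (Eventually.of_forall fun n => (mul_assoc _ _ _).symm) EventuallyEq.rfl
  have hb2 : (fun n : ℕ => (A/p) * ((n:ℝ) ^ (-(1/p)) * (n:ℝ)⁻¹) * (e₁ n + e₂ n)) =O[atTop]
      fun n : ℕ => (n:ℝ) ^ (-1 - β) := by
    have hx1 : (fun n : ℕ => ((n:ℝ) ^ (-(1/p)) * (n:ℝ)⁻¹) * e₁ n) =O[atTop]
        fun n : ℕ => (n:ℝ) ^ (-1 - β) := by
      have h1 := (isBigO_refl (fun n : ℕ => (n:ℝ) ^ (-(1/p)) * (n:ℝ)⁻¹) atTop).mul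
        (he₁.trans hδC)
      have h3 : (fun n : ℕ => ((n:ℝ) ^ (-(1/p)) * (n:ℝ)⁻¹) * (n:ℝ) ^ ((1-C₀)/p)) =ᶠ[atTop]
          fun n : ℕ => (n:ℝ) ^ (-(1/p) + -1 + (1-C₀)/p) := by
        filter_upwards [eventually_ge_atTop 1] with n hn
        have hn0 : (0:ℝ) < (n:ℝ) := by exact_mod_cast hn
        rw [← Real.rpow_neg_one (n:ℝ), ← Real.rpow_add hn0, ← Real.rpow_add hn0]
      refine (h1.trans_eventuallyEq h3).trans (nat_rpow_isBigO ?_)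
      rw [show -(1/p) + -1 + (1-C₀)/p = -1 - C₀/p from by ring]
      linarith [hβC]
    have hx2 : (fun n : ℕ => ((n:ℝ) ^ (-(1/p)) * (n:ℝ)⁻¹) * e₂ n) =O[atTop]
        fun n : ℕ => (n:ℝ) ^ (-1 - β) := by
      have h1 := (isBigO_refl (fun n : ℕ => (n:ℝ) ^ (-(1/p)) * (n:ℝ)⁻¹) atTop).mul
        (he₂.isBigO_one ℝ)
      have h3 : (fun n : ℕ => ((n:ℝ) ^ (-(1/p)) * (n:ℝ)⁻¹) * 1) =ᶠ[atTop]
          fun n : ℕ => (n:ℝ) ^ (-(1/p) + -1) := by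
        filter_upwards [eventually_ge_atTop 1] with n hn
        have hn0 : (0:ℝ) < (n:ℝ) := by exact_mod_cast hn
        rw [mul_one, ← Real.rpow_neg_one (n:ℝ), ← Real.rpow_add hn0]
      refine (h1.trans_eventuallyEq h3).trans (nat_rpow_isBigO ?_)
      rw [show -(1/p) + (-1:ℝ) = -1 - 1/p from by ring]
      linarith [hβ1]
    exact ((hx1.add hx2).const_mul_left (A/p)).congr'
      (Eventually.of_forall fun n => by ring) EventuallyEq.rfl
  have hb3 : (fun n : ℕ => A * (n:ℝ) ^ (-(1/p)) * ((1 - t n) ^ (-(1/p)) - 1 - t n / p))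
      =O[atTop] fun n : ℕ => (n:ℝ) ^ (-1 - β) := by
    have h1 := (isBigO_refl (fun n : ℕ => (n:ℝ) ^ (-(1/p))) atTop).mul (hEbig.trans (ht.mul ht))
    have h3 : (fun n : ℕ => (n:ℝ) ^ (-(1/p)) * ((n:ℝ) ^ (-(r/p)) * (n:ℝ) ^ (-(r/p)))) =ᶠ[atTop]
        fun n : ℕ => (n:ℝ) ^ (-(1/p) + (-(r/p) + -(r/p))) := by
      filter_upwards [eventually_ge_atTop 1] with n hn
      have hn0 : (0:ℝ) < (n:ℝ) := by exact_mod_cast hn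
      rw [← Real.rpow_add hn0, ← Real.rpow_add hn0]
    have h4 := (h1.trans_eventuallyEq h3).trans (nat_rpow_isBigO (b := -1 - β) (by
      have e : -(1/p) + (-(r/p) + -(r/p)) = -1 - r/p := by
        rw [hpdef]
        have h0 : r + 1 ≠ 0 := by positivity
        field_simp
        ring
      rw [e]
      linarith [hβr]))
    exact (h4.const_mul_left A).congr'
      (Eventually.of_forall fun n => (mul_assoc _ _ _).symm) EventuallyEq.rfl
  have hbig := (hb1.add hb2).add hb3
  have hfinal := hmain.trans_isBigO hbig
  simp only [neg_div]
  exact hfinal
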